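/- The number of involutions of {1,...,n} avoiding the pattern 4321 equals the n-th Motzkin number. -/

import Mathlib

def Av4321 {n : ℕ} (σ : Equiv.Perm (Fin n)) : Prop :=
  ¬ ∃ i j k l : Fin n, i < j ∧ j < k ∧ k < l ∧ σ l < σ k ∧ σ k < σ j ∧ σ j < σ i

/-- Number of Motzkin paths of length `n`: sequences of steps U=(1,1), H=(1,0), D=(1,-1)
whose partial sums stay nonnegative and whose total sum is zero. -/
noncomputable def motzkinNumber (n : ℕ) : ℕ :=
  Nat.card {f : Fin n → Fin 3 //
    (∀ k : ℕ, k ≤ n → 0 ≤ ∑ i ∈ Finset.univ.filter (fun i : Fin n => (i : ℕ) < k),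
        (![1, 0, -1] : Fin 3 → ℤ) (f i)) ∧
    (∑ i : Fin n, (![1, 0, -1] : Fin 3 → ℤ) (f i)) = 0}

open Finset

namespace AvMotzkin

variable {n : ℕ}

lemma inv_apply {τ : Equiv.Perm (Fin n)} (hτ : τ * τ = 1) (x : Fin n) : τ (τ x) = x := by
  have := congrArg (fun σ : Equiv.Perm (Fin n) => σ x) hτ
  simpa using this

/-- The arc diagram of an involution has a nesting. -/
def Nested (τ : Equiv.Perm (Fin n)) : Prop :=
  ∃ a b c d : Fin n, a < b ∧ b < c ∧ c < d ∧ τ a = d ∧ τ b = c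

lemma av_iff {τ : Equiv.Perm (Fin n)} (hτ : τ * τ = 1) : Av4321 τ ↔ ¬ Nested τ := by
  constructor
  · intro hav hne
    obtain ⟨a, b, c, d, hab, hbc, hcd, had, hbc'⟩ := hne
    have hc : τ c = b := by rw [← hbc', inv_apply hτ]
    have hd : τ d = a := by rw [← had, inv_apply hτ]
    exact hav ⟨a, b, c, d, hab, hbc, hcd, by rw [hc, hd]; exact hab,
      by rw [hc, hbc']; exact hbc, by rw [hbc', had]; exact hcd⟩
  · intro hn
    intro ⟨i, j, k, l, hij, hjk, hkl, h1, h2, h3⟩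
    apply hn
    rcases lt_trichotomy j (τ j) with h | h | h
    · exact ⟨i, j, τ j, τ i, hij, h, h3, rfl, rfl⟩
    · refine ⟨τ l, τ k, k, l, h1, ?_, hkl, inv_apply hτ l, inv_apply hτ k⟩
      calc τ k < τ j := h2
        _ = j := h.symm
        _ < k := hjk
    · exact ⟨τ k, τ j, j, k, h2, h, hjk, inv_apply hτ k, inv_apply hτ j⟩

lemma sum_wt (s : Finset (Fin n)) (f : Fin n → Fin 3) :
    ∑ i ∈ s, (![1, 0, -1] : Fin 3 → ℤ) (f i)
      = ((s.filter (fun i => f i = 0)).card : ℤ) - (s.filter (fun i => f i = 2)).card := by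
  have h : ∀ v : Fin 3, (![1, 0, -1] : Fin 3 → ℤ) v
      = (if v = 0 then 1 else 0) - (if v = 2 then 1 else 0) := by decide
  simp_rw [h]
  rw [Finset.sum_sub_distrib]
  simp [Finset.sum_boole]

/-- The step sequence associated to an involution. -/
def phiF (τ : Equiv.Perm (Fin n)) : Fin n → Fin 3 := fun i =>
  if i < τ i then 0 else if τ i = i then 1 else 2

lemma phiF_eq_zero_iff {τ : Equiv.Perm (Fin n)} {i : Fin n} : phiF τ i = 0 ↔ i < τ i := by
  unfold phiF; split_ifs with h1 h2 <;> simp_all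

lemma phiF_eq_two_iff {τ : Equiv.Perm (Fin n)} {i : Fin n} : phiF τ i = 2 ↔ τ i < i := by
  unfold phiF; split_ifs with h1 h2 <;> simp_all
  · omega
  · exact lt_of_le_of_ne h1 h2

lemma phiF_eq_one_iff {τ : Equiv.Perm (Fin n)} {i : Fin n} : phiF τ i = 1 ↔ τ i = i := by
  unfold phiF; split_ifs with h1 h2 <;> simp_all
  omega

lemma closer_card_le {τ : Equiv.Perm (Fin n)} (hτ : τ * τ = 1) (s : Finset (Fin n))
    (hs : ∀ i ∈ s, ∀ j : Fin n, j ≤ i → j ∈ s) :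
    (s.filter (fun i => τ i < i)).card ≤ (s.filter (fun i => i < τ i)).card := by
  apply Finset.card_le_card_of_injOn τ
  · intro i hi
    simp only [mem_coe, mem_filter] at hi ⊢
    exact ⟨hs i hi.1 (τ i) hi.2.le, by rw [inv_apply hτ]; exact hi.2⟩
  · exact Set.InjOn.mono (fun x _ => Set.mem_univ x) (τ.injective.injOn)

lemma opener_card_eq {τ : Equiv.Perm (Fin n)} (hτ : τ * τ = 1) :
    ((univ : Finset (Fin n)).filter (fun i => i < τ i)).card
      = ((univ : Finset (Fin n)).filter (fun i => τ i < i)).card := by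
  apply le_antisymm
  · apply Finset.card_le_card_of_injOn τ
    · intro i hi
      simp only [mem_coe, mem_filter] at hi ⊢
      exact ⟨mem_univ _, by rw [inv_apply hτ]; exact hi.2⟩
    · exact Set.InjOn.mono (fun x _ => Set.mem_univ x) (τ.injective.injOn)
  · exact closer_card_le hτ univ (fun _ _ j _ => mem_univ j)

lemma phiF_filter_zero (τ : Equiv.Perm (Fin n)) (s : Finset (Fin n)) :
    s.filter (fun i => phiF τ i = 0) = s.filter (fun i => i < τ i) := by
  apply filter_congr; intro i _; simp [phiF_eq_zero_iff]

lemma phiF_filter_two (τ : Equiv.Perm (Fin n)) (s : Finset (Fin n)) :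
    s.filter (fun i => phiF τ i = 2) = s.filter (fun i => τ i < i) := by
  apply filter_congr; intro i _; simp [phiF_eq_two_iff]

lemma phiF_path (τ : Equiv.Perm (Fin n)) (hτ : τ * τ = 1) :
    (∀ k : ℕ, k ≤ n → 0 ≤ ∑ i ∈ Finset.univ.filter (fun i : Fin n => (i : ℕ) < k),
        (![1, 0, -1] : Fin 3 → ℤ) (phiF τ i)) ∧
    (∑ i : Fin n, (![1, 0, -1] : Fin 3 → ℤ) (phiF τ i)) = 0 := by
  constructor
  · intro k _
    rw [sum_wt, phiF_filter_zero, phiF_filter_two, sub_nonneg, Nat.cast_le]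
    apply closer_card_le hτ
    intro i hi j hj
    simp only [mem_filter, mem_univ, true_and] at hi ⊢
    exact lt_of_le_of_lt (by exact_mod_cast hj) hi
  · rw [sum_wt, phiF_filter_zero, phiF_filter_two, sub_eq_zero, Nat.cast_inj]
    exact opener_card_eq hτ

lemma mono_on_openers {τ : Equiv.Perm (Fin n)} (hn : ¬ Nested τ)
    {a b : Fin n} (hab : a < b) (hb : b < τ b) : τ a < τ b := by
  rcases lt_trichotomy (τ a) (τ b) with h | h | h
  · exact h
  · exact absurd (τ.injective h) hab.ne
  · exact absurd ⟨a, b, τ b, τ a, hab, hb, h, rfl, rfl⟩ hn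

lemma phi_inj {τ1 τ2 : Equiv.Perm (Fin n)} (hτ1 : τ1 * τ1 = 1) (hτ2 : τ2 * τ2 = 1)
    (hn1 : ¬ Nested τ1) (hn2 : ¬ Nested τ2)
    (h : phiF τ1 = phiF τ2) : τ1 = τ2 := by
  have hzero : ∀ i : Fin n, i < τ1 i ↔ i < τ2 i := fun i => by
    rw [← phiF_eq_zero_iff (τ := τ1), ← phiF_eq_zero_iff (τ := τ2), h]
  have htwo : ∀ i : Fin n, τ1 i < i ↔ τ2 i < i := fun i => by
    rw [← phiF_eq_two_iff (τ := τ1), ← phiF_eq_two_iff (τ := τ2), h]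
  set S : Finset (Fin n) := univ.filter (fun i => i < τ1 i) with hSdef
  set T : Finset (Fin n) := univ.filter (fun i => τ1 i < i) with hTdef
  have hT : T.card = S.card := (opener_card_eq hτ1).symm
  have hmemS : ∀ i : Fin n, i ∈ S ↔ i < τ1 i := fun i => by simp [hSdef]
  have hmemT : ∀ i : Fin n, i ∈ T ↔ τ1 i < i := fun i => by simp [hTdef]
  set oemb := S.orderEmbOfFin (rfl : S.card = S.card) with hoemb
  have hF1 : (fun r : Fin S.card => τ1 (oemb r)) = T.orderEmbOfFin hT := by
    apply orderEmbOfFin_unique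
    · intro r
      rw [hmemT, inv_apply hτ1]
      exact (hmemS _).1 (orderEmbOfFin_mem S rfl r)
    · intro r s hrs
      exact mono_on_openers hn1 (oemb.strictMono hrs)
        ((hmemS _).1 (orderEmbOfFin_mem S rfl s))
  have hF2 : (fun r : Fin S.card => τ2 (oemb r)) = T.orderEmbOfFin hT := by
    apply orderEmbOfFin_unique
    · intro r
      have ho := (hzero _).1 ((hmemS _).1 (orderEmbOfFin_mem S rfl r))
      rw [hmemT]
      exact (htwo _).2 (by rw [inv_apply hτ2]; exact ho)
    · intro r s hrs
      exact mono_on_openers hn2 (oemb.strictMono hrs)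
        ((hzero _).1 ((hmemS _).1 (orderEmbOfFin_mem S rfl s)))
  have hSeq : ∀ i ∈ S, τ1 i = τ2 i := by
    intro i hi
    have : (i : Fin n) ∈ Set.range oemb := by
      rw [hoemb, range_orderEmbOfFin]; exact_mod_cast hi
    obtain ⟨r, hr⟩ := this
    rw [← hr]
    exact (congrFun hF1 r).trans (congrFun hF2 r).symm
  apply Equiv.ext
  intro i
  rcases lt_trichotomy i (τ1 i) with hlt | heq | hgt
  · exact hSeq i ((hmemS i).2 hlt)
  · have h2 : phiF τ2 i = 1 := by rw [← h, phiF_eq_one_iff]; exact heq.symm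
    rw [phiF_eq_one_iff.1 h2, ← heq]
  · have hj : τ1 i ∈ S := by
      rw [hmemS, inv_apply hτ1]; exact hgt
    have := hSeq _ hj
    rw [inv_apply hτ1] at this
    have := congrArg τ2 this
    rw [inv_apply hτ2] at this
    exact this.symm

lemma opener_lt_closer {k : ℕ} {S T : Finset (Fin n)} (hS : S.card = k) (hT : T.card = k)
    (hdisj : ∀ i ∈ S, i ∉ T)
    (hcount : ∀ c ∈ T, (T.filter (fun i => i ≤ c)).card ≤ (S.filter (fun i => i ≤ c)).card)
    (r : Fin k) : S.orderEmbOfFin hS r < T.orderEmbOfFin hT r := by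
  have h0r : S.orderEmbOfFin hS r ∈ S := orderEmbOfFin_mem S hS r
  have h2c : T.orderEmbOfFin hT r ∈ T := orderEmbOfFin_mem T hT r
  have hA : (r : ℕ) + 1 ≤ (T.filter (fun i => i ≤ T.orderEmbOfFin hT r)).card := by
    have hsub : (Finset.Iic r).image (T.orderEmbOfFin hT)
        ⊆ T.filter (fun i => i ≤ T.orderEmbOfFin hT r) := by
      intro x hx
      simp only [mem_image, mem_Iic] at hx
      obtain ⟨j, hj, rfl⟩ := hx
      exact mem_filter.2 ⟨orderEmbOfFin_mem T hT j, (T.orderEmbOfFin hT).monotone hj⟩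
    calc (r : ℕ) + 1 = (Finset.Iic r).card := (Fin.card_Iic r).symm
      _ = ((Finset.Iic r).image (T.orderEmbOfFin hT)).card :=
          (Finset.card_image_of_injective _ (T.orderEmbOfFin hT).injective).symm
      _ ≤ _ := Finset.card_le_card hsub
  by_contra hcon
  push_neg at hcon
  have hcon' : T.orderEmbOfFin hT r < S.orderEmbOfFin hS r := by
    rcases lt_or_eq_of_le hcon with h | h
    · exact h
    · exact absurd h2c (h ▸ hdisj _ h0r)
  have hB : (S.filter (fun i => i ≤ T.orderEmbOfFin hT r)).card ≤ (r : ℕ) := by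
    have hsub : S.filter (fun i => i ≤ T.orderEmbOfFin hT r)
        ⊆ (Finset.Iio r).image (S.orderEmbOfFin hS) := by
      intro x hx
      obtain ⟨hxS, hxc⟩ := mem_filter.1 hx
      have : (x : Fin n) ∈ Set.range (S.orderEmbOfFin hS) := by
        rw [range_orderEmbOfFin]; exact_mod_cast hxS
      obtain ⟨j, hj⟩ := this
      have hjr : j < r := by
        rw [← (S.orderEmbOfFin hS).lt_iff_lt, hj]
        exact lt_of_le_of_lt hxc hcon'
      exact mem_image.2 ⟨j, mem_Iio.2 hjr, hj⟩
    calc _ ≤ ((Finset.Iio r).image (S.orderEmbOfFin hS)).card := Finset.card_le_card hsub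
      _ ≤ (Finset.Iio r).card := Finset.card_image_le
      _ = (r : ℕ) := Fin.card_Iio r
  have := hcount _ h2c
  omega

def Sf (f : Fin n → Fin 3) : Finset (Fin n) := univ.filter (fun i => f i = 0)
def Tf (f : Fin n → Fin 3) : Finset (Fin n) := univ.filter (fun i => f i = 2)

lemma Tcard_eq (f : Fin n → Fin 3)
    (htot : (∑ i : Fin n, (![1, 0, -1] : Fin 3 → ℤ) (f i)) = 0) :
    (Tf f).card = (Sf f).card := by
  rw [sum_wt] at htot
  have := sub_eq_zero.1 htot
  exact_mod_cast this.symm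

lemma count_le (f : Fin n → Fin 3)
    (hpre : ∀ k : ℕ, k ≤ n → 0 ≤ ∑ i ∈ Finset.univ.filter (fun i : Fin n => (i : ℕ) < k),
        (![1, 0, -1] : Fin 3 → ℤ) (f i)) :
    ∀ c ∈ Tf f, ((Tf f).filter (fun i => i ≤ c)).card ≤ ((Sf f).filter (fun i => i ≤ c)).card := by
  intro c _
  have h := hpre ((c : ℕ) + 1) c.isLt
  rw [sum_wt, sub_nonneg, Nat.cast_le] at h
  have e2 : (((univ : Finset (Fin n)).filter (fun i : Fin n => (i : ℕ) < (c : ℕ) + 1)).filter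
      (fun i => f i = 2)) = (Tf f).filter (fun i => i ≤ c) := by
    ext i
    simp only [Tf, mem_filter, mem_univ, true_and, Fin.le_def]
    omega
  have e0 : (((univ : Finset (Fin n)).filter (fun i : Fin n => (i : ℕ) < (c : ℕ) + 1)).filter
      (fun i => f i = 0)) = (Sf f).filter (fun i => i ≤ c) := by
    ext i
    simp only [Sf, mem_filter, mem_univ, true_and, Fin.le_def]
    omega
  rw [e2, e0] at h
  exact h

noncomputable def psiG (f : Fin n → Fin 3) (hT : (Tf f).card = (Sf f).card) :
    Fin n → Fin n := fun i =>
  if h0 : f i = 0 then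
    (Tf f).orderEmbOfFin hT (((Sf f).orderIsoOfFin rfl).symm ⟨i, by simp [Sf, h0]⟩)
  else if h2 : f i = 2 then
    (Sf f).orderEmbOfFin rfl (((Tf f).orderIsoOfFin hT).symm ⟨i, by simp [Tf, h2]⟩)
  else i

variable {f : Fin n → Fin 3} {hT : (Tf f).card = (Sf f).card}

lemma f_oemb (r : Fin (Sf f).card) : f ((Sf f).orderEmbOfFin rfl r) = 0 := by
  have := orderEmbOfFin_mem (Sf f) rfl r
  simp only [Sf, mem_filter] at this
  exact this.2

lemma f_cemb (r : Fin (Sf f).card) : f ((Tf f).orderEmbOfFin hT r) = 2 := by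
  have := orderEmbOfFin_mem (Tf f) hT r
  simp only [Tf, mem_filter] at this
  exact this.2

lemma psiG_oemb (r : Fin (Sf f).card) :
    psiG f hT ((Sf f).orderEmbOfFin rfl r) = (Tf f).orderEmbOfFin hT r := by
  have h0 : f ((Sf f).orderEmbOfFin rfl r) = 0 := f_oemb r
  rw [psiG, dif_pos h0]
  congr 1
  rw [OrderIso.symm_apply_eq]
  exact Subtype.ext (coe_orderIsoOfFin_apply (Sf f) rfl r).symm

lemma psiG_cemb (r : Fin (Sf f).card) :
    psiG f hT ((Tf f).orderEmbOfFin hT r) = (Sf f).orderEmbOfFin rfl r := by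
  have h2 : f ((Tf f).orderEmbOfFin hT r) = 2 := f_cemb r
  have h0 : ¬ f ((Tf f).orderEmbOfFin hT r) = 0 := by rw [h2]; decide
  rw [psiG, dif_neg h0, dif_pos h2]
  congr 1
  rw [OrderIso.symm_apply_eq]
  exact Subtype.ext (coe_orderIsoOfFin_apply (Tf f) hT r).symm

lemma psiG_fix {i : Fin n} (h0 : f i ≠ 0) (h2 : f i ≠ 2) : psiG f hT i = i := by
  rw [psiG, dif_neg h0, dif_neg h2]

lemma existsS {i : Fin n} (h0 : f i = 0) : ∃ r, (Sf f).orderEmbOfFin rfl r = i := by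
  have : i ∈ Set.range ((Sf f).orderEmbOfFin rfl) := by
    rw [range_orderEmbOfFin]
    simp [Sf, h0]
  exact this

lemma existsT {i : Fin n} (h2 : f i = 2) :
    ∃ r : Fin (Sf f).card, (Tf f).orderEmbOfFin hT r = i := by
  have : i ∈ Set.range ((Tf f).orderEmbOfFin hT) := by
    rw [range_orderEmbOfFin]
    simp [Tf, h2]
  exact this

lemma psiG_involutive : Function.Involutive (psiG f hT) := by
  intro i
  have h3 : ∀ v : Fin 3, v = 0 ∨ v = 1 ∨ v = 2 := by decide
  rcases h3 (f i) with h | h | h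
  · obtain ⟨r, rfl⟩ := existsS h
    rw [psiG_oemb, psiG_cemb]
  · have e : psiG f hT i = i := psiG_fix (by rw [h]; decide) (by rw [h]; decide)
    rw [e, e]
  · obtain ⟨r, rfl⟩ := existsT (hT := hT) h
    rw [psiG_cemb, psiG_oemb]

lemma psiG_key
    (hpre : ∀ k : ℕ, k ≤ n → 0 ≤ ∑ i ∈ Finset.univ.filter (fun i : Fin n => (i : ℕ) < k),
        (![1, 0, -1] : Fin 3 → ℤ) (f i))
    (r : Fin (Sf f).card) : (Sf f).orderEmbOfFin rfl r < (Tf f).orderEmbOfFin hT r := by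
  apply opener_lt_closer
  · intro i hi
    simp only [Sf, Tf, mem_filter, mem_univ, true_and] at hi ⊢
    rw [hi]; decide
  · exact count_le f hpre

lemma psiG_lt0
    (hpre : ∀ k : ℕ, k ≤ n → 0 ≤ ∑ i ∈ Finset.univ.filter (fun i : Fin n => (i : ℕ) < k),
        (![1, 0, -1] : Fin 3 → ℤ) (f i))
    {i : Fin n} (h0 : f i = 0) : i < psiG f hT i := by
  obtain ⟨r, rfl⟩ := existsS h0
  rw [psiG_oemb]
  exact psiG_key hpre r

lemma psiG_lt2
    (hpre : ∀ k : ℕ, k ≤ n → 0 ≤ ∑ i ∈ Finset.univ.filter (fun i : Fin n => (i : ℕ) < k),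
        (![1, 0, -1] : Fin 3 → ℤ) (f i))
    {i : Fin n} (h2 : f i = 2) : psiG f hT i < i := by
  obtain ⟨r, rfl⟩ := existsT (hT := hT) h2
  rw [psiG_cemb]
  exact psiG_key hpre r

noncomputable def psiPerm (f : Fin n → Fin 3) (hT : (Tf f).card = (Sf f).card) :
    Equiv.Perm (Fin n) :=
  Function.Involutive.toPerm (psiG f hT) psiG_involutive

lemma psiPerm_apply (i : Fin n) : psiPerm f hT i = psiG f hT i := rfl

lemma psiPerm_mul : psiPerm f hT * psiPerm f hT = 1 := by
  apply Equiv.ext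
  intro x
  have : psiPerm f hT (psiPerm f hT x) = x := psiG_involutive x
  simpa using this

lemma psiPerm_not_nested
    (hpre : ∀ k : ℕ, k ≤ n → 0 ≤ ∑ i ∈ Finset.univ.filter (fun i : Fin n => (i : ℕ) < k),
        (![1, 0, -1] : Fin 3 → ℤ) (f i)) : ¬ Nested (psiPerm f hT) := by
  rintro ⟨a, b, c, d, hab, hbc, hcd, had, hbcc⟩
  rw [psiPerm_apply] at had hbcc
  have h3 : ∀ v : Fin 3, v = 0 ∨ v = 1 ∨ v = 2 := by decide
  have had' : a < d := hab.trans (hbc.trans hcd)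
  have ha0 : f a = 0 := by
    rcases h3 (f a) with h | h | h
    · exact h
    · have e : psiG f hT a = a := psiG_fix (by rw [h]; decide) (by rw [h]; decide)
      rw [e] at had
      exact absurd had had'.ne
    · have hlt := psiG_lt2 (hT := hT) hpre h
      rw [had] at hlt
      exact absurd hlt (not_lt.2 had'.le)
  have hb0 : f b = 0 := by
    rcases h3 (f b) with h | h | h
    · exact h
    · have e : psiG f hT b = b := psiG_fix (by rw [h]; decide) (by rw [h]; decide)
      rw [e] at hbcc
      exact absurd hbcc hbc.ne
    · have hlt := psiG_lt2 (hT := hT) hpre h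
      rw [hbcc] at hlt
      exact absurd hlt (not_lt.2 hbc.le)
  obtain ⟨r, hr⟩ := existsS ha0
  obtain ⟨s, hs⟩ := existsS hb0
  have hrs : r < s := by
    rw [← ((Sf f).orderEmbOfFin rfl).lt_iff_lt, hr, hs]
    exact hab
  have hdc : d < c := by
    rw [← had, ← hbcc, ← hr, ← hs, psiG_oemb, psiG_oemb]
    exact ((Tf f).orderEmbOfFin hT).strictMono hrs
  exact absurd hcd (not_lt.2 hdc.le)

lemma phiF_psiPerm
    (hpre : ∀ k : ℕ, k ≤ n → 0 ≤ ∑ i ∈ Finset.univ.filter (fun i : Fin n => (i : ℕ) < k),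
        (![1, 0, -1] : Fin 3 → ℤ) (f i)) : phiF (psiPerm f hT) = f := by
  funext i
  have h3 : ∀ v : Fin 3, v = 0 ∨ v = 1 ∨ v = 2 := by decide
  rcases h3 (f i) with h | h | h
  · rw [h, phiF_eq_zero_iff, psiPerm_apply]
    exact psiG_lt0 hpre h
  · rw [h, phiF_eq_one_iff, psiPerm_apply]
    exact psiG_fix (by rw [h]; decide) (by rw [h]; decide)
  · rw [h, phiF_eq_two_iff, psiPerm_apply]
    exact psiG_lt2 hpre h

end AvMotzkin

open AvMotzkin
theorem involutions_avoiding_4321_card (n : ℕ) :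
    Nat.card {τ : Equiv.Perm (Fin n) // τ * τ = 1 ∧ Av4321 τ} = motzkinNumber n := by
  rw [motzkinNumber]
  apply Nat.card_eq_of_bijective
    (f := fun τ => ⟨phiF τ.1, phiF_path τ.1 τ.2.1⟩)
  constructor
  · rintro ⟨τ1, hτ1, ha1⟩ ⟨τ2, hτ2, ha2⟩ h
    have h' : phiF τ1 = phiF τ2 := congrArg Subtype.val h
    exact Subtype.ext (phi_inj hτ1 hτ2 ((av_iff hτ1).1 ha1) ((av_iff hτ2).1 ha2) h')
  · rintro ⟨f, hpre, htot⟩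
    have hT : (Tf f).card = (Sf f).card := Tcard_eq f htot
    have hmul : psiPerm f hT * psiPerm f hT = 1 := psiPerm_mul
    refine ⟨⟨psiPerm f hT, hmul, (av_iff hmul).2 (psiPerm_not_nested hpre)⟩, ?_⟩
    exact Subtype.ext (phiF_psiPerm hpre)
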